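/- Let X ~ ANN(α_X, σ_X²) and Y ~ ANN(α_Y, σ_Y²) be two independent centered exponential smoothing processes of equal length n. Then the asymmetric DTW distance with squared L² cross-distance d(i,j) = E[(X_i - Y_j)²] equals DTW_asym(X,Y) = σ_X²(n + C(n,2)·α_X²) + σ_Y²(n + ⌊n²/4⌋·α_Y²). -/

import Mathlib

open MeasureTheory ProbabilityTheory
open scoped ENNReal

/-- The asymmetric DTW dynamic-programming warping matrix. -/
noncomputable def warp (d : ℕ → ℕ → ℝ≥0∞) : ℕ → ℕ → ℝ≥0∞
  | 0, _ => ⊤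
  | 1, j => if j = 1 then d 1 1 else ⊤
  | (i + 2), j =>
      if j = 0 then ⊤
      else min (warp d (i + 1) j) (min (warp d (i + 1) (j - 1)) (warp d (i + 1) (j - 2)))
            + d (i + 2) j

set_option linter.unusedSectionVars false
set_option linter.unusedVariables false

section Aux
open Real Set
open scoped NNReal


lemma gauss_int (v : ℝ≥0) (hv : v ≠ 0) (g : ℝ → ℝ) :
    ∫ x, g x ∂(gaussianReal 0 v) = ∫ x, gaussianPDFReal 0 v x * g x := by
  rw [gaussianReal_of_var_ne_zero _ hv]
  have h1 : gaussianPDF 0 v = fun x => ((gaussianPDFReal 0 v x).toNNReal : ℝ≥0∞) := by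
    ext x; simp [gaussianPDF, ENNReal.ofReal]
  rw [h1, integral_withDensity_eq_integral_smul
    ((measurable_gaussianPDFReal 0 v).real_toNNReal)]
  congr 1; ext x
  simp [NNReal.smul_def, Real.coe_toNNReal _ (gaussianPDFReal_nonneg 0 v x)]

lemma pdf_eq (v : ℝ≥0) (hv : v ≠ 0) (x : ℝ) :
    gaussianPDFReal 0 v x = (Real.sqrt (2 * Real.pi * v))⁻¹ * rexp (-((2 * (v:ℝ))⁻¹) * x ^ 2) := by
  have hv' : (v:ℝ) ≠ 0 := by exact_mod_cast hv
  rw [gaussianPDFReal]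
  congr 1
  field_simp
  rw [sub_zero]

lemma gauss_integrable (v : ℝ≥0) (hv : v ≠ 0) :
    Integrable (fun x : ℝ => gaussianPDFReal 0 v x * x ^ 2) := by
  have hv0 : (0:ℝ) < (v:ℝ) := lt_of_le_of_ne v.coe_nonneg (by exact_mod_cast (Ne.symm hv))
  have hb : (0:ℝ) < (2 * (v:ℝ))⁻¹ := by positivity
  have h := (integrable_rpow_mul_exp_neg_mul_sq hb (s := 2) (by norm_num)).const_mul
      ((Real.sqrt (2 * Real.pi * v))⁻¹)
  refine h.congr (Filter.Eventually.of_forall fun x => ?_)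
  simp only [Real.rpow_two]
  rw [pdf_eq v hv]
  ring

lemma gauss_pdf_even (v : ℝ≥0) (x : ℝ) : gaussianPDFReal 0 v (-x) = gaussianPDFReal 0 v x := by
  simp [gaussianPDFReal, neg_sq]

lemma gauss_mean (v : ℝ≥0) : ∫ x, x ∂(gaussianReal 0 v) = 0 := by
  by_cases hv : v = 0
  · simp [hv]
  rw [gauss_int v hv]
  have h : ∫ x : ℝ, gaussianPDFReal 0 v (-x) * (-x)
      = ∫ x : ℝ, gaussianPDFReal 0 v x * x := by
    exact integral_neg_eq_self (μ := (volume : Measure ℝ)) (fun x : ℝ => gaussianPDFReal 0 v x * x)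
  rw [show (fun x : ℝ => gaussianPDFReal 0 v (-x) * (-x))
      = fun x : ℝ => -(gaussianPDFReal 0 v x * x) by
    ext x; rw [gauss_pdf_even]; ring] at h
  rw [integral_neg] at h
  linarith

lemma gauss_sq (v : ℝ≥0) : ∫ x, x ^ 2 ∂(gaussianReal 0 v) = v := by
  by_cases hv : v = 0
  · simp [hv]
  have hv0 : (0:ℝ) < (v:ℝ) := lt_of_le_of_ne v.coe_nonneg (by exact_mod_cast (Ne.symm hv))
  have hb : (0:ℝ) < (2 * (v:ℝ))⁻¹ := by positivity
  rw [gauss_int v hv]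
  have habs : (fun x : ℝ => gaussianPDFReal 0 v x * x ^ 2)
      = fun x : ℝ => (fun y : ℝ => gaussianPDFReal 0 v y * y ^ 2) |x| := by
    ext x
    simp only
    rw [show gaussianPDFReal 0 v |x| = gaussianPDFReal 0 v x by
      rcases abs_cases x with ⟨h, _⟩ | ⟨h, _⟩
      · rw [h]
      · rw [h, gauss_pdf_even], sq_abs]
  rw [habs, integral_comp_abs (f := fun y : ℝ => gaussianPDFReal 0 v y * y ^ 2)]
  have key : ∫ y in Ioi (0:ℝ), gaussianPDFReal 0 v y * y ^ 2
      = (Real.sqrt (2 * Real.pi * v))⁻¹ *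
        ((2 * (v:ℝ))⁻¹ ^ (-(((2:ℝ) + 1)) / 2) * (1 / 2) * Real.Gamma (((2:ℝ) + 1) / 2)) := by
    rw [← integral_rpow_mul_exp_neg_mul_rpow (by norm_num : (0:ℝ) < 2)
      (by norm_num : (-1:ℝ) < 2) hb, ← integral_const_mul]
    refine setIntegral_congr_fun measurableSet_Ioi fun y hy => ?_
    rw [pdf_eq v hv]
    simp only [show ((2:ℝ)) = ((2:ℕ):ℝ) by norm_num, Real.rpow_natCast]
    ring
  rw [key]
  have h3 : Real.Gamma (((2:ℝ) + 1) / 2) = Real.sqrt Real.pi / 2 := by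
    rw [show (((2:ℝ)+1)/2) = 1/2 + 1 by norm_num, Real.Gamma_add_one (by norm_num),
      Real.Gamma_one_half_eq]
    ring
  set s : ℝ := 2 * (v:ℝ) with hsdef
  have hs : (0:ℝ) < s := by positivity
  have h4 : (s⁻¹) ^ (-(((2:ℝ) + 1)) / 2) = s * Real.sqrt s := by
    rw [show (-(((2:ℝ)+1))/2) = -(3/2) by norm_num, Real.inv_rpow hs.le,
      Real.rpow_neg hs.le, inv_inv,
      show ((3:ℝ)/2) = 1 + 1/2 by norm_num, Real.rpow_add hs, Real.rpow_one,
      ← Real.sqrt_eq_rpow]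
  have h5 : Real.sqrt (2 * Real.pi * v) = Real.sqrt Real.pi * Real.sqrt s := by
    rw [← Real.sqrt_mul Real.pi_pos.le]
    congr 1
    ring
  rw [h3, h4, h5]
  have hsq : Real.sqrt s ^ 2 = s := Real.sq_sqrt hs.le
  have hπ : (0:ℝ) < Real.sqrt Real.pi := Real.sqrt_pos.mpr Real.pi_pos
  have hss : (0:ℝ) < Real.sqrt s := Real.sqrt_pos.mpr hs
  field_simp
  linear_combination (2 * Real.sqrt s * Real.sqrt Real.pi) * hsdef

lemma gauss_sq_integrable (v : ℝ≥0) : Integrable (fun x : ℝ => x ^ 2) (gaussianReal 0 v) := by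
  by_cases hv : v = 0
  · simp only [hv, gaussianReal_zero_var]
    have h : (fun x : ℝ => x ^ 2) =ᵐ[Measure.dirac (0:ℝ)] fun _ => (0:ℝ) ^ 2 := by
      rw [MeasureTheory.ae_dirac_eq]
      exact Filter.eventually_pure.mpr rfl
    exact (integrable_const _).congr h.symm
  · rw [gaussianReal_of_var_ne_zero _ hv,
      show gaussianPDF 0 v = fun x => ((gaussianPDFReal 0 v x).toNNReal : ℝ≥0∞) by
        ext x; simp [gaussianPDF, ENNReal.ofReal],
      integrable_withDensity_iff_integrable_smul
        ((measurable_gaussianPDFReal 0 v).real_toNNReal)]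
    refine (gauss_integrable v hv).congr (Filter.Eventually.of_forall fun x => ?_)
    simp [NNReal.smul_def, Real.coe_toNNReal _ (gaussianPDFReal_nonneg 0 v x)]

lemma gauss_memL2 (v : ℝ≥0) : MemLp (id : ℝ → ℝ) 2 (gaussianReal 0 v) :=
  (memLp_two_iff_integrable_sq measurable_id.aestronglyMeasurable).mpr (gauss_sq_integrable v)

end Aux

section Proc
open Real Set
open scoped NNReal
variable {Ω : Type*} [MeasurableSpace Ω] {P : Measure Ω} [IsProbabilityMeasure P]

lemma eps_memL2 {σ : ℝ} (hσ : 0 < σ) {e : Ω → ℝ} (hm : Measurable e)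
    (hg : Measure.map e P = gaussianReal 0 (Real.toNNReal (σ ^ 2))) :
    MemLp e 2 P := by
  have h := (memLp_map_measure_iff (g := (id : ℝ → ℝ))
    measurable_id.aestronglyMeasurable hm.aemeasurable).mp
    (by rw [hg]; exact gauss_memL2 _)
  exact h

lemma eps_mean {σ : ℝ} (hσ : 0 < σ) {e : Ω → ℝ} (hm : Measurable e)
    (hg : Measure.map e P = gaussianReal 0 (Real.toNNReal (σ ^ 2))) :
    ∫ ω, e ω ∂P = 0 := by
  have h := integral_map (μ := P) (φ := e) (f := fun x : ℝ => x) hm.aemeasurable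
    measurable_id.aestronglyMeasurable
  rw [hg, gauss_mean] at h
  exact h.symm

lemma eps_sq {σ : ℝ} (hσ : 0 < σ) {e : Ω → ℝ} (hm : Measurable e)
    (hg : Measure.map e P = gaussianReal 0 (Real.toNNReal (σ ^ 2))) :
    ∫ ω, (e ω) ^ 2 ∂P = σ ^ 2 := by
  have h := integral_map (μ := P) (φ := e) (f := fun x : ℝ => x ^ 2) hm.aemeasurable
    (measurable_id.pow_const 2).aestronglyMeasurable
  rw [hg, gauss_sq] at h
  rw [← h]
  exact Real.coe_toNNReal _ (sq_nonneg σ)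

lemma eps_var {σ : ℝ} (hσ : 0 < σ) {e : Ω → ℝ} (hm : Measurable e)
    (hg : Measure.map e P = gaussianReal 0 (Real.toNNReal (σ ^ 2))) :
    variance e P = σ ^ 2 := by
  rw [variance_eq_sub (eps_memL2 hσ hm hg)]
  have h1 : ∫ ω, (e ^ 2) ω ∂P = σ ^ 2 := by
    simpa [Pi.pow_apply] using eps_sq hσ hm hg
  rw [h1, eps_mean hσ hm hg]
  ring

lemma X_moments {α σ : ℝ} (hσ : 0 < σ) {ε : ℕ → Ω → ℝ} (hmε : ∀ i, Measurable (ε i))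
    (hindep : iIndepFun ε P)
    (hgauss : ∀ i, Measure.map (ε i) P = gaussianReal 0 (Real.toNNReal (σ ^ 2)))
    (X : ℕ → Ω → ℝ)
    (hX : ∀ i ω, X i ω = ε i ω + α * ∑ k ∈ Finset.Ico 1 i, ε k ω)
    (i : ℕ) (hi : 1 ≤ i) :
    MemLp (X i) 2 P ∧ (∫ ω, X i ω ∂P = 0) ∧
      (∫ ω, (X i ω) ^ 2 ∂P = σ ^ 2 * (1 + ((i - 1 : ℕ) : ℝ) * α ^ 2)) := by
  classical
  set c : ℕ → ℝ := fun k => if k = i then 1 else α with hc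
  set s : Finset ℕ := insert i (Finset.Ico 1 i) with hs
  have hinotin : i ∉ Finset.Ico 1 i := by simp
  have hXsum : X i = ∑ k ∈ s, (fun ω => c k * ε k ω) := by
    funext ω
    rw [Finset.sum_apply, hs, Finset.sum_insert hinotin, hX]
    simp only [hc, if_pos rfl, one_mul]
    congr 1
    rw [Finset.mul_sum]
    refine Finset.sum_congr rfl fun k hk => ?_
    have : k ≠ i := by
      rcases Finset.mem_Ico.mp hk with ⟨_, h2⟩; omega
    rw [if_neg this]
  have hmem : ∀ k ∈ s, MemLp (fun ω => c k * ε k ω) 2 P := fun k _ =>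
    (eps_memL2 hσ (hmε k) (hgauss k)).const_mul (c k)
  have hXmem : MemLp (X i) 2 P := by
    rw [hXsum]; exact memLp_finset_sum' s hmem
  have hmean : ∫ ω, X i ω ∂P = 0 := by
    rw [hXsum]
    rw [show ∫ ω, (∑ k ∈ s, fun ω' => c k * ε k ω') ω ∂P
        = ∫ ω, ∑ k ∈ s, c k * ε k ω ∂P by congr 1; funext ω; rw [Finset.sum_apply]]
    rw [integral_finset_sum s fun k hk => ((hmem k hk).integrable one_le_two)]
    refine Finset.sum_eq_zero fun k _ => ?_
    rw [integral_const_mul, eps_mean hσ (hmε k) (hgauss k), mul_zero]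
  refine ⟨hXmem, hmean, ?_⟩
  have hvar : variance (X i) P = σ ^ 2 * (1 + ((i - 1 : ℕ) : ℝ) * α ^ 2) := by
    rw [hXsum, IndepFun.variance_sum hmem ?_]
    · have : ∀ k ∈ s, variance (fun ω => c k * ε k ω) P = c k ^ 2 * σ ^ 2 := by
        intro k _
        rw [variance_const_mul, eps_var hσ (hmε k) (hgauss k)]
      rw [Finset.sum_congr rfl this, hs, Finset.sum_insert hinotin]
      simp only [hc, if_pos rfl, one_pow, one_mul]
      have : ∀ k ∈ Finset.Ico 1 i, (if k = i then (1:ℝ) else α) ^ 2 * σ ^ 2 = α ^ 2 * σ ^ 2 := by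
        intro k hk
        rcases Finset.mem_Ico.mp hk with ⟨_, h2⟩
        rw [if_neg (by omega)]
      rw [Finset.sum_congr rfl this, Finset.sum_const, Nat.card_Ico, nsmul_eq_mul]
      ring
    · intro k hk l hl hkl
      exact ((hindep.indepFun hkl).comp (measurable_const_mul (c k))
        (measurable_const_mul (c l)))
  rw [variance_eq_sub hXmem] at hvar
  have h2 : ∫ ω, (X i ω) ^ 2 ∂P = (∫ ω, ((X i) ^ 2) ω ∂P) := by
    congr 1
  rw [h2]
  have hm' : ∫ ω, X i ω ∂P = ∫ ω, (X i) ω ∂P := rfl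
  rw [show (∫ ω, (X i) ω ∂P) = 0 from hmean] at hvar
  simpa using hvar

lemma cross_dist {XX YY : Ω → ℝ} (hXm : MemLp XX 2 P) (hYm : MemLp YY 2 P)
    (hXmean : ∫ ω, XX ω ∂P = 0) (hYmean : ∫ ω, YY ω ∂P = 0)
    (hind : IndepFun XX YY P) :
    ∫ ω, (XX ω - YY ω) ^ 2 ∂P = (∫ ω, XX ω ^ 2 ∂P) + ∫ ω, YY ω ^ 2 ∂P := by
  have hX2 : Integrable (fun ω => XX ω ^ 2) P := hXm.integrable_sq
  have hY2 : Integrable (fun ω => YY ω ^ 2) P := hYm.integrable_sq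
  have hXY : Integrable (fun ω => XX ω * YY ω) P :=
    hind.integrable_mul (hXm.integrable one_le_two) (hYm.integrable one_le_two)
  have hXYval : ∫ ω, XX ω * YY ω ∂P = 0 := by
    have h := hind.integral_mul_eq_mul_integral (hXm.integrable one_le_two).aestronglyMeasurable
      (hYm.integrable one_le_two).aestronglyMeasurable
    calc ∫ ω, XX ω * YY ω ∂P = integral P (XX * YY) := rfl
      _ = integral P XX * integral P YY := h
      _ = 0 := by rw [show integral P XX = 0 from hXmean, zero_mul]
  have expand : (fun ω => (XX ω - YY ω) ^ 2)
      = fun ω => XX ω ^ 2 - 2 * (XX ω * YY ω) + YY ω ^ 2 := by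
    funext ω; ring
  rw [expand]
  have h1 : ∫ ω, (XX ω ^ 2 - 2 * (XX ω * YY ω)) + YY ω ^ 2 ∂P
      = (∫ ω, XX ω ^ 2 - 2 * (XX ω * YY ω) ∂P) + ∫ ω, YY ω ^ 2 ∂P :=
    integral_add (f := fun ω => XX ω ^ 2 - 2 * (XX ω * YY ω))
      (g := fun ω => YY ω ^ 2) (hX2.sub (hXY.const_mul 2)) hY2
  have h2 : ∫ ω, XX ω ^ 2 - 2 * (XX ω * YY ω) ∂P
      = (∫ ω, XX ω ^ 2 ∂P) - ∫ ω, 2 * (XX ω * YY ω) ∂P :=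
    integral_sub (f := fun ω => XX ω ^ 2) (g := fun ω => 2 * (XX ω * YY ω))
      hX2 (hXY.const_mul 2)
  rw [h1, h2, integral_const_mul, hXYval]
  ring

end Proc

section DP
def T (i j : ℕ) : ℕ := ∑ m ∈ Finset.range i, (j - 1 - 2 * m)

lemma T_mono (i : ℕ) {j j' : ℕ} (h : j ≤ j') : T i j ≤ T i j' :=
  Finset.sum_le_sum fun m _ => by omega

lemma T_zero (i : ℕ) : T i 0 = 0 := by simp [T]

lemma T_one (i : ℕ) : T i 1 = 0 := by
  simp only [T]
  exact Finset.sum_eq_zero fun m _ => by omega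

lemma T_succ (i j : ℕ) : T (i + 1) j = T i (j - 2) + (j - 1) := by
  rw [T, Finset.sum_range_succ']
  congr 1
  · exact Finset.sum_congr rfl fun m _ => by omega

lemma T_succ_self (k : ℕ) : T (k + 1) k = T k k := by
  rw [T, Finset.sum_range_succ, show k - 1 - 2 * k = 0 by omega, add_zero]
  rfl

lemma T_diag : ∀ n, T n n = n ^ 2 / 4 := by
  intro n
  induction n using Nat.strong_induction_on with
  | _ n ih =>
    match n with
    | 0 => simp [T]
    | 1 => simp [T]
    | (k + 2) =>
      rw [T_succ (k + 1) (k + 2), show k + 2 - 2 = k by omega, show k + 2 - 1 = k + 1 by omega,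
        T_succ_self, ih k (by omega)]
      have h : (k + 2) ^ 2 = k ^ 2 + 4 * k + 4 := by ring
      omega

noncomputable def Wf (αX αY σX σY : ℝ) (i j : ℕ) : ℝ :=
  σX ^ 2 * ((i : ℝ) + (i.choose 2 : ℝ) * αX ^ 2) + σY ^ 2 * ((i : ℝ) + (T i j : ℝ) * αY ^ 2)

lemma Wf_nonneg (αX αY σX σY : ℝ) (i j : ℕ) : 0 ≤ Wf αX αY σX σY i j := by
  unfold Wf; positivity

lemma Wf_mono (αX αY σX σY : ℝ) (i : ℕ) {j j' : ℕ} (h : j ≤ j') :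
    Wf αX αY σX σY i j ≤ Wf αX αY σX σY i j' := by
  unfold Wf
  have := T_mono i h
  have : (T i j : ℝ) ≤ (T i j' : ℝ) := by exact_mod_cast this
  have h2 : σY ^ 2 * ((i : ℝ) + (T i j : ℝ) * αY ^ 2) ≤ σY ^ 2 * ((i : ℝ) + (T i j' : ℝ) * αY ^ 2) := by
    apply mul_le_mul_of_nonneg_left _ (sq_nonneg σY)
    have h3 : (T i j : ℝ) * αY ^ 2 ≤ (T i j' : ℝ) * αY ^ 2 :=
      mul_le_mul_of_nonneg_right this (sq_nonneg αY)
    linarith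
  linarith

lemma Wf_rec (αX αY σX σY : ℝ) (m j : ℕ) (hj : 1 ≤ j) :
    Wf αX αY σX σY (m + 2) j = Wf αX αY σX σY (m + 1) (max 1 (j - 2))
      + (σX ^ 2 * (1 + ((m + 2 - 1 : ℕ) : ℝ) * αX ^ 2)
        + σY ^ 2 * (1 + ((j - 1 : ℕ) : ℝ) * αY ^ 2)) := by
  unfold Wf
  have hch : ((m + 2).choose 2 : ℝ) = ((m + 1).choose 2 : ℝ) + ((m + 1 : ℕ) : ℝ) := by
    rw [show (m + 2) = (m + 1) + 1 from rfl, Nat.choose_succ_succ (m + 1) 1]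
    push_cast [Nat.choose_one_right]
    ring
  have hT : (T (m + 2) j : ℝ) = (T (m + 1) (max 1 (j - 2)) : ℝ) + ((j - 1 : ℕ) : ℝ) := by
    have h1 : T (m + 2) j = T (m + 1) (j - 2) + (j - 1) := T_succ (m + 1) j
    have h2 : T (m + 1) (j - 2) = T (m + 1) (max 1 (j - 2)) := by
      rcases Nat.lt_or_ge j 3 with h | h
      · interval_cases j <;> simp [T_zero, T_one]
      · rw [show max 1 (j - 2) = j - 2 by omega]
    rw [h1, h2]
    push_cast
    ring
  rw [hch, hT, show ((m + 2 - 1 : ℕ) : ℝ) = ((m + 1 : ℕ) : ℝ) by norm_num]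
  push_cast
  ring

lemma warp_closed (αX αY σX σY : ℝ) (d : ℕ → ℕ → ℝ≥0∞)
    (hd : ∀ i j, 1 ≤ i → 1 ≤ j → d i j = ENNReal.ofReal
      (σX ^ 2 * (1 + ((i - 1 : ℕ) : ℝ) * αX ^ 2) + σY ^ 2 * (1 + ((j - 1 : ℕ) : ℝ) * αY ^ 2))) :
    ∀ i, 1 ≤ i → ∀ j, warp d i j =
      if 1 ≤ j ∧ j ≤ 2 * i - 1 then ENNReal.ofReal (Wf αX αY σX σY i j) else ⊤ := by
  intro i hi
  induction i, hi using Nat.le_induction with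
  | base =>
    intro j
    rw [warp]
    rcases eq_or_ne j 1 with rfl | hj
    · rw [if_pos rfl, if_pos (by omega), hd 1 1 le_rfl le_rfl]
      norm_num [Wf, T_one]
    · rw [if_neg hj, if_neg (by omega)]
  | succ i hi IH =>
    obtain ⟨m, rfl⟩ : ∃ m, i = m + 1 := ⟨i - 1, by omega⟩
    intro j
    rw [warp]
    rcases Nat.eq_zero_or_pos j with rfl | hj
    · rw [if_pos rfl, if_neg (by omega)]
    rw [if_neg (by omega)]
    rcases Nat.lt_or_ge (2 * (m + 2) - 1) j with hbig | hle
    · -- j too large: everything is ⊤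
      have h1 : warp d (m + 1) j = ⊤ := by rw [IH j, if_neg (by omega)]
      have h2 : warp d (m + 1) (j - 1) = ⊤ := by rw [IH (j - 1), if_neg (by omega)]
      have h3 : warp d (m + 1) (j - 2) = ⊤ := by rw [IH (j - 2), if_neg (by omega)]
      rw [h1, h2, h3, if_neg (by omega)]
      simp
    · -- main case
      rw [if_pos ⟨hj, hle⟩]
      set j' : ℕ := max 1 (j - 2) with hj'
      have hj'le : j' ≤ 2 * (m + 1) - 1 := by omega
      have hj'1 : 1 ≤ j' := le_max_left _ _
      have hmin : min (warp d (m + 1) j) (min (warp d (m + 1) (j - 1)) (warp d (m + 1) (j - 2)))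
          = ENNReal.ofReal (Wf αX αY σX σY (m + 1) j') := by
        have hub : ∀ k, j - 2 ≤ k →
            ENNReal.ofReal (Wf αX αY σX σY (m + 1) j') ≤ warp d (m + 1) k := by
          intro k hk
          rw [IH k]
          split
          · next h => exact ENNReal.ofReal_le_ofReal (Wf_mono αX αY σX σY (m + 1) (by omega))
          · exact le_top
        have heq : ∃ k, (k = j ∨ k = j - 1 ∨ k = j - 2) ∧ k = j' ∧
            warp d (m + 1) k = ENNReal.ofReal (Wf αX αY σX σY (m + 1) j') := by
          rcases Nat.lt_or_ge j 3 with hsm | hlg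
          · rcases Nat.lt_or_ge j 2 with h1 | h2
            · exact ⟨j, Or.inl rfl, by omega, by
                rw [IH j, if_pos (by omega), show j = j' by omega]⟩
            · exact ⟨j - 1, Or.inr (Or.inl rfl), by omega, by
                rw [IH (j - 1), if_pos (by omega), show j - 1 = j' by omega]⟩
          · exact ⟨j - 2, Or.inr (Or.inr rfl), by omega, by
              rw [IH (j - 2), if_pos (by omega), show j - 2 = j' by omega]⟩
        apply le_antisymm
        · obtain ⟨k, hkmem, hkj', hkval⟩ := heq
          rcases hkmem with rfl | rfl | rfl
          · exact le_trans (min_le_left _ _) (le_of_eq hkval)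
          · exact le_trans (le_trans (min_le_right _ _) (min_le_left _ _)) (le_of_eq hkval)
          · exact le_trans (le_trans (min_le_right _ _) (min_le_right _ _)) (le_of_eq hkval)
        · exact le_min (hub j (by omega)) (le_min (hub (j - 1) (by omega)) (hub (j - 2) (by omega)))
      rw [hmin, hd (m + 2) j (by omega) hj,
        ← ENNReal.ofReal_add (Wf_nonneg _ _ _ _ _ _) (by positivity),
        ← Wf_rec αX αY σX σY m j hj]

end DP

/-- For two independent centered ANN (exponential smoothing) processes of equal length `n`,
the asymmetric DTW distance with squared `L²` cross-distance `d(i,j) = E[(X i - Y j)²]` equals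
`σX² (n + C(n,2) αX²) + σY² (n + ⌊n²/4⌋ αY²)`. -/
theorem dtw_asym_ann
    {Ω : Type*} [MeasurableSpace Ω] (P : Measure Ω) [IsProbabilityMeasure P]
    (n : ℕ) (hn : 1 ≤ n)
    (αX αY σX σY : ℝ) (hσX : 0 < σX) (hσY : 0 < σY)
    (ε η : ℕ → Ω → ℝ) (hmε : ∀ i, Measurable (ε i)) (hmη : ∀ i, Measurable (η i))
    (hindepε : iIndepFun ε P)
    (hindepη : iIndepFun η P)
    (hgaussε : ∀ i, Measure.map (ε i) P = gaussianReal 0 (Real.toNNReal (σX ^ 2)))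
    (hgaussη : ∀ i, Measure.map (η i) P = gaussianReal 0 (Real.toNNReal (σY ^ 2)))
    (X Y : ℕ → Ω → ℝ)
    (hX : ∀ i ω, X i ω = ε i ω + αX * ∑ k ∈ Finset.Ico 1 i, ε k ω)
    (hY : ∀ j ω, Y j ω = η j ω + αY * ∑ k ∈ Finset.Ico 1 j, η k ω)
    (hXY : ∀ i j, IndepFun (X i) (Y j) P)
    (d : ℕ → ℕ → ℝ≥0∞)
    (hd : ∀ i j, d i j = ENNReal.ofReal (∫ ω, (X i ω - Y j ω) ^ 2 ∂P)) :
    warp d n n = ENNReal.ofReal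
      (σX ^ 2 * ((n : ℝ) + (n.choose 2 : ℝ) * αX ^ 2)
        + σY ^ 2 * ((n : ℝ) + ((n ^ 2 / 4 : ℕ) : ℝ) * αY ^ 2)) := by
  have hd' : ∀ i j, 1 ≤ i → 1 ≤ j → d i j = ENNReal.ofReal
      (σX ^ 2 * (1 + ((i - 1 : ℕ) : ℝ) * αX ^ 2)
        + σY ^ 2 * (1 + ((j - 1 : ℕ) : ℝ) * αY ^ 2)) := by
    intro i j hi hj
    obtain ⟨hXmem, hXmean, hXsq⟩ := X_moments hσX hmε hindepε hgaussε X hX i hi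
    obtain ⟨hYmem, hYmean, hYsq⟩ := X_moments hσY hmη hindepη hgaussη Y hY j hj
    rw [hd i j, cross_dist hXmem hYmem hXmean hYmean (hXY i j), hXsq, hYsq]
  have h := warp_closed αX αY σX σY d hd' n hn n
  rw [h, if_pos (by omega)]
  unfold Wf
  rw [T_diag]
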